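/- arXiv:1911.06056 — 13 statements merged into one kernel-verified Lean document; each statement's English description precedes it below -/
import Mathlib

section
/- Lemma (operators from face paths between boundary faces, Lemma 1 of the paper): Let (f₁, …, f_m; ν₁, …, ν_{m−1}) be a face path with m ≥ 2 whose two end faces are boundary faces, i.e. (ι f₁).card = 1 and (ι f_m).card = 1. Then for every volume ν, the number of indices i ∈ {1, …, m} with ν ∈ ι f_i is even. (This is exactly the condition that the Z-type operator supported on the faces of the path commutes with every volume stabilizer A_ν of the 3D toric code, hence is a stabilizer or a logical operator.) -/
/-- A face path of length `m ≥ 1` in a 3D lattice: faces `f 0, …, f (m-1)` together with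
pairwise distinct volumes `v 0, …, v (m-2)` such that `v i` is incident on both
`f i` and `f (i+1)`.  Here `ι g` is the set of volumes a face `g` is incident on. -/
structure FacePath {Faces Volumes : Type*} (ι : Faces → Finset Volumes) (m : ℕ) where
  f : ℕ → Faces
  v : ℕ → Volumes
  one_le : 1 ≤ m
  mem_left : ∀ i, i + 1 < m → v i ∈ ι (f i)
  mem_right : ∀ i, i + 1 < m → v i ∈ ι (f (i + 1))
  distinct : ∀ i j, i + 1 < m → j + 1 < m → i ≠ j → v i ≠ v j

/-- Lemma 1 (operators from face paths between boundary faces): if both end faces of a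
face path are boundary faces (incident on exactly one volume), then every volume is
incident on an even number of faces of the path; hence the corresponding `Z`-type
operator commutes with every volume stabilizer. -/
theorem face_path_between_boundaries_even_incidence
    {Faces Volumes : Type*} [Fintype Faces] [Fintype Volumes] [DecidableEq Volumes]
    (ι : Faces → Finset Volumes)
    (hcard : ∀ f, 1 ≤ (ι f).card ∧ (ι f).card ≤ 2)
    (m : ℕ) (hm : 2 ≤ m) (p : FacePath ι m)
    (h1 : (ι (p.f 0)).card = 1) (h2 : (ι (p.f (m - 1))).card = 1) :
    ∀ ν : Volumes,
      Even (((Finset.range m).filter (fun i => ν ∈ ι (p.f i))).card) := by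
  intro ν
  -- Key characterization of membership
  have key : ∀ i, i < m → (ν ∈ ι (p.f i) ↔
      ∃ k, k + 1 < m ∧ ν = p.v k ∧ (i = k ∨ i = k + 1)) := by
    intro i hi
    constructor
    · intro hmem
      rcases Nat.eq_zero_or_pos i with h0 | hpos
      · subst h0
        obtain ⟨a, ha⟩ := Finset.card_eq_one.mp h1
        have hv0 : p.v 0 ∈ ι (p.f 0) := p.mem_left 0 (by omega)
        rw [ha, Finset.mem_singleton] at hmem hv0
        exact ⟨0, by omega, by rw [hmem, hv0], Or.inl rfl⟩
      · rcases eq_or_ne i (m - 1) with hlast | hne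
        · subst hlast
          obtain ⟨a, ha⟩ := Finset.card_eq_one.mp h2
          have hv : p.v (m - 2) ∈ ι (p.f (m - 2 + 1)) := p.mem_right (m - 2) (by omega)
          have hmm : m - 2 + 1 = m - 1 := by omega
          rw [hmm] at hv
          rw [ha, Finset.mem_singleton] at hmem hv
          exact ⟨m - 2, by omega, by rw [hmem, hv], Or.inr (by omega)⟩
        · -- interior face: ι (f i) = {v (i-1), v i}
          have hi1 : i - 1 + 1 = i := by omega
          have hL : p.v (i - 1) ∈ ι (p.f i) := by
            have := p.mem_right (i - 1) (by omega)
            rwa [hi1] at this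
          have hR : p.v i ∈ ι (p.f i) := p.mem_left i (by omega)
          have hneq : p.v (i - 1) ≠ p.v i := p.distinct _ _ (by omega) (by omega) (by omega)
          have hsub : ({p.v (i - 1), p.v i} : Finset Volumes) ⊆ ι (p.f i) := by
            intro x hx
            rcases Finset.mem_insert.mp hx with h | h
            · rwa [h]
            · rw [Finset.mem_singleton.mp h]; exact hR
          have heq : ({p.v (i - 1), p.v i} : Finset Volumes) = ι (p.f i) := by
            apply Finset.eq_of_subset_of_card_le hsub
            rw [Finset.card_pair hneq]
            exact (hcard (p.f i)).2
          rw [← heq, Finset.mem_insert, Finset.mem_singleton] at hmem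
          rcases hmem with h | h
          · exact ⟨i - 1, by omega, h, Or.inr (by omega)⟩
          · exact ⟨i, by omega, h, Or.inl rfl⟩
    · rintro ⟨k, hk, rfl, hik | hik⟩
      · subst hik; exact p.mem_left i hk
      · subst hik; exact p.mem_right k hk
  by_cases h : ∃ k, k + 1 < m ∧ ν = p.v k
  · obtain ⟨k, hk, hν⟩ := h
    have : (Finset.range m).filter (fun i => ν ∈ ι (p.f i)) = {k, k + 1} := by
      ext i
      simp only [Finset.mem_filter, Finset.mem_range, Finset.mem_insert,
        Finset.mem_singleton]
      constructor
      · rintro ⟨hi, hmem⟩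
        obtain ⟨k', hk', hν', hik'⟩ := (key i hi).mp hmem
        have : k' = k := by
          by_contra hne
          exact p.distinct k' k hk' hk hne (hν' ▸ hν)
        subst this
        exact hik'
      · rintro (h | h) <;> rw [h]
        · exact ⟨by omega, (key k (by omega)).mpr ⟨k, hk, hν, Or.inl rfl⟩⟩
        · exact ⟨hk, (key (k + 1) hk).mpr ⟨k, hk, hν, Or.inr rfl⟩⟩
    rw [this, Finset.card_pair (by omega)]
    exact even_two
  · have : (Finset.range m).filter (fun i => ν ∈ ι (p.f i)) = ∅ := by
      ext i
      simp only [Finset.mem_filter, Finset.mem_range, Finset.notMem_empty, iff_false,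
        not_and]
      intro hi hmem
      obtain ⟨k, hk, hν, _⟩ := (key i hi).mp hmem
      exact h ⟨k, hk, hν⟩
    rw [this, Finset.card_empty]
    exact Even.zero
end

section
/- Lemma (operators from simple face cycles, Lemma 2 of the paper): Let (f₁, …, f_m; ν₁, …, ν_{m−1}) be a face path with m ≥ 2, and suppose there is a volume ν₀ with ν₀ ∉ {ν₁, …, ν_{m−1}}, ν₀ ∈ ι f₁ and ν₀ ∈ ι f_m (so the path is a simple face cycle closing through ν₀). Then for every volume ν, the number of indices i ∈ {1, …, m} with ν ∈ ι f_i is even. (Hence the corresponding Z-type operator commutes with every volume stabilizer A_ν of the 3D toric code and is a stabilizer or a logical operator.) -/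
/-- Lemma 2 (operators from simple face cycles): if a face path closes up through a
volume `ν₀` distinct from all the intermediate volumes and incident on both its first
and last face, then every volume is incident on an even number of faces of the path;
hence the corresponding `Z`-type operator commutes with every volume stabilizer. -/
theorem simple_face_cycle_even_incidence
    {Faces Volumes : Type*} [Fintype Faces] [Fintype Volumes] [DecidableEq Volumes]
    (ι : Faces → Finset Volumes)
    (hcard : ∀ f, 1 ≤ (ι f).card ∧ (ι f).card ≤ 2)
    (m : ℕ) (hm : 2 ≤ m) (p : FacePath ι m)
    (ν₀ : Volumes)
    (hnotmid : ∀ i, i + 1 < m → p.v i ≠ ν₀)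
    (hfirst : ν₀ ∈ ι (p.f 0)) (hlast : ν₀ ∈ ι (p.f (m - 1))) :
    ∀ ν : Volumes,
      Even (((Finset.range m).filter (fun i => ν ∈ ι (p.f i))).card) := by
  intro ν
  classical
  -- the cyclic sequence of volumes
  set w : ℕ → Volumes := fun i => if i + 1 < m then p.v i else ν₀ with hw
  set prev : ℕ → ℕ := fun i => if i = 0 then m - 1 else i - 1 with hprevdef
  have hprev_lt : ∀ i, i < m → prev i < m := by
    intro i hi; simp only [hprevdef]; split <;> omega
  -- injectivity of w on [0, m)
  have winj : ∀ i j, i < m → j < m → w i = w j → i = j := by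
    intro i j hi hj h
    by_contra hne
    rcases lt_or_ge (i + 1) m with hi1 | hi1 <;> rcases lt_or_ge (j + 1) m with hj1 | hj1
    · simp only [hw, if_pos hi1, if_pos hj1] at h
      exact p.distinct i j hi1 hj1 hne h
    · simp only [hw, if_pos hi1, if_neg (by omega : ¬ (j + 1 < m))] at h
      exact hnotmid i hi1 h
    · simp only [hw, if_neg (by omega : ¬ (i + 1 < m)), if_pos hj1] at h
      exact hnotmid j hj1 h.symm
    · omega
  -- both adjacent volumes are incident
  have hcur : ∀ i, i < m → w i ∈ ι (p.f i) := by
    intro i hi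
    rcases lt_or_ge (i + 1) m with h1 | h1
    · simpa only [hw, if_pos h1] using p.mem_left i h1
    · have : i = m - 1 := by omega
      subst this
      simpa only [hw, if_neg (by omega : ¬ (m - 1 + 1 < m))] using hlast
  have hpmem : ∀ i, i < m → w (prev i) ∈ ι (p.f i) := by
    intro i hi
    rcases Nat.eq_zero_or_pos i with h0 | h0
    · subst h0
      simp only [hprevdef, if_pos rfl, hw, if_neg (by omega : ¬ (m - 1 + 1 < m))]
      exact hfirst
    · have hpi : prev i = i - 1 := by simp only [hprevdef]; split <;> omega
      have h1 : (i - 1) + 1 < m := by omega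
      have h2 : (i - 1) + 1 = i := by omega
      rw [hpi]
      simpa only [hw, if_pos h1, h2] using p.mem_right (i - 1) h1
  have hpne : ∀ i, i < m → prev i ≠ i := by
    intro i hi; simp only [hprevdef]; split <;> omega
  -- the incidence set is exactly the adjacent pair
  have hiota : ∀ i, i < m → ι (p.f i) = {w (prev i), w i} := by
    intro i hi
    have hsub : ({w (prev i), w i} : Finset Volumes) ⊆ ι (p.f i) := by
      intro x hx
      simp only [Finset.mem_insert, Finset.mem_singleton] at hx
      rcases hx with h | h <;> subst h
      · exact hpmem i hi
      · exact hcur i hi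
    have hne : w (prev i) ≠ w i := fun h =>
      hpne i hi (winj _ _ (hprev_lt i hi) hi h)
    have hc2 : ({w (prev i), w i} : Finset Volumes).card = 2 :=
      Finset.card_pair hne
    exact (Finset.eq_of_subset_of_card_le hsub (by rw [hc2]; exact (hcard (p.f i)).2)).symm
  have hmemiff : ∀ i, i < m → (ν ∈ ι (p.f i) ↔ ν = w (prev i) ∨ ν = w i) := by
    intro i hi
    rw [hiota i hi]
    simp [Finset.mem_insert, Finset.mem_singleton]
  by_cases hex : ∃ j, j < m ∧ w j = ν
  · obtain ⟨j, hj, hwj⟩ := hex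
    set nxt : ℕ := if j + 1 = m then 0 else j + 1 with hnxt
    have hnxt_lt : nxt < m := by simp only [hnxt]; split <;> omega
    have hnxt_ne : nxt ≠ j := by simp only [hnxt]; split <;> omega
    have hprev_nxt : prev nxt = j := by
      rcases eq_or_ne (j + 1) m with h | h
      · have h1 : nxt = 0 := by simp [hnxt, h]
        rw [h1]; simp [hprevdef]; omega
      · have h1 : nxt = j + 1 := by simp [hnxt, h]
        rw [h1]; simp only [hprevdef]; rw [if_neg (by omega : ¬ j + 1 = 0)]; omega
    have hAeq : (Finset.range m).filter (fun i => ν ∈ ι (p.f i)) = {nxt, j} := by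
      ext i
      simp only [Finset.mem_filter, Finset.mem_range, Finset.mem_insert,
        Finset.mem_singleton]
      constructor
      · rintro ⟨hi, hmem⟩
        rcases (hmemiff i hi).1 hmem with h | h
        · left
          have hpij : prev i = j :=
            winj _ _ (hprev_lt i hi) hj (hwj.trans h).symm
          -- derive i = nxt from prev i = j
          simp only [hprevdef] at hpij
          simp only [hnxt]
          rcases eq_or_ne i 0 with h0 | h0
          · subst h0
            rw [if_pos rfl] at hpij
            rw [if_pos (by omega : j + 1 = m)]
          · rw [if_neg h0] at hpij
            rw [if_neg (by omega : ¬ j + 1 = m)]; omega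
        · right; exact winj _ _ hi hj (hwj.trans h).symm
      · rintro (h | h) <;> subst h
        · exact ⟨hnxt_lt, (hmemiff _ hnxt_lt).2 (Or.inl (by rw [hprev_nxt, hwj]))⟩
        · exact ⟨hj, (hmemiff _ hj).2 (Or.inr hwj.symm)⟩
    rw [hAeq, Finset.card_insert_of_notMem (by simpa using hnxt_ne),
      Finset.card_singleton]
    exact ⟨1, rfl⟩
  · push_neg at hex
    have hAeq : (Finset.range m).filter (fun i => ν ∈ ι (p.f i)) = ∅ := by
      ext i
      simp only [Finset.mem_filter, Finset.mem_range, Finset.notMem_empty, iff_false]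
      rintro ⟨hi, hmem⟩
      rcases (hmemiff i hi).1 hmem with h | h
      · exact hex (prev i) (hprev_lt i hi) h.symm
      · exact hex i hi h.symm
    rw [hAeq]
    simp
end

section
/- Lemma (face paths between inequivalent boundary faces are logical operators, Lemma 3 of the paper): Let f and f′ be boundary faces such that there exists NO face path with first face f and last face f′ whose vector χ lies in the Z-stabilizer subspace (i.e. f and f′ are not face-equivalent). Then for every face path (f₁, …, f_m; ν₁, …, ν_{m−1}) with m ≥ 2, f₁ = f and f_m = f′: (i) the vector χ(f₁, …, f_m) does not lie in the Z-stabilizer subspace, and (ii) for every volume ν the number of indices i with ν ∈ ι f_i is even. (Thus the corresponding Z-type operator commutes with every volume stabilizer but is not a stabilizer, i.e. it is a Z-type logical operator.) -/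
/-- `chi f m g` is the parity (in `ZMod 2`) of the number of indices `i < m` with
`f i = g`; this is the `ZMod 2` vector of the list of faces `f 0, …, f (m-1)`. -/
def chi {Faces : Type*} [DecidableEq Faces] (f : ℕ → Faces) (m : ℕ) : Faces → ZMod 2 :=
  fun g => (((Finset.range m).filter (fun i => f i = g)).card : ZMod 2)

/-- The `ZMod 2` indicator vector of a finite set of faces. -/
def ind {Faces : Type*} [DecidableEq Faces] (A : Finset Faces) : Faces → ZMod 2 :=
  fun g => if g ∈ A then 1 else 0

/-- The `Z`-stabilizer subspace: the `ℤ/2`-span of the indicator vectors of the sets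
`I e` of faces incident on each edge `e`. -/
def ZStab {Faces Edges : Type*} [DecidableEq Faces] (I : Edges → Finset Faces) :
    Submodule (ZMod 2) (Faces → ZMod 2) :=
  Submodule.span (ZMod 2) {x : Faces → ZMod 2 | ∃ e : Edges, x = ind (I e)}

/-- Lemma 3 (face paths between inequivalent boundary faces give logical operators):
if `f` and `f'` are boundary faces that are not face-equivalent — no face path from `f`
to `f'` has its `χ`-vector in the `Z`-stabilizer subspace — then for every face path from
`f` to `f'` the vector `χ` is not in the `Z`-stabilizer subspace, and every volume is
incident on an even number of faces of the path. -/
theorem face_path_between_inequivalent_boundaries_is_logical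
    {Faces Volumes Edges : Type*} [Fintype Faces] [Fintype Volumes] [Fintype Edges]
    [DecidableEq Faces] [DecidableEq Volumes]
    (ι : Faces → Finset Volumes) (I : Edges → Finset Faces)
    (hcard : ∀ f, 1 ≤ (ι f).card ∧ (ι f).card ≤ 2)
    (f f' : Faces) (hf : (ι f).card = 1) (hf' : (ι f').card = 1)
    (hnoteq : ¬ ∃ (m : ℕ) (p : FacePath ι m),
        p.f 0 = f ∧ p.f (m - 1) = f' ∧ chi p.f m ∈ ZStab I) :
    ∀ (m : ℕ), 2 ≤ m → ∀ p : FacePath ι m, p.f 0 = f → p.f (m - 1) = f' →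
      chi p.f m ∉ ZStab I ∧
      ∀ ν : Volumes,
        Even (((Finset.range m).filter (fun i => ν ∈ ι (p.f i))).card) := by
  intro m hm p hp0 hpm
  refine ⟨fun hchi => hnoteq ⟨m, p, hp0, hpm, hchi⟩, fun ν => ?_⟩
  have hmem : ∀ i, i < m → (ν ∈ ι (p.f i) ↔
      ∃ j, j + 1 < m ∧ p.v j = ν ∧ (i = j ∨ i = j + 1)) := by
    intro i hi
    constructor
    · intro hν
      rcases Nat.eq_zero_or_pos i with h0 | h0
      · subst h0
        refine ⟨0, by omega, ?_, Or.inl rfl⟩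
        have hv0 := p.mem_left 0 (by omega)
        rw [hp0] at hν hv0
        exact Finset.card_le_one.mp (le_of_eq hf) _ hv0 _ hν
      · rcases eq_or_lt_of_le (Nat.succ_le_of_lt hi) with hlast | hmid
        · refine ⟨i - 1, by omega, ?_, Or.inr (by omega)⟩
          have hv := p.mem_right (i - 1) (by omega)
          rw [show i - 1 + 1 = m - 1 by omega, hpm] at hv
          rw [show i = m - 1 by omega, hpm] at hν
          exact Finset.card_le_one.mp (le_of_eq hf') _ hv _ hν
        · have hv1 := p.mem_right (i - 1) (by omega)
          rw [show i - 1 + 1 = i by omega] at hv1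
          have hv2 := p.mem_left i (by omega)
          by_contra hc
          push_neg at hc
          have h1 : p.v (i - 1) ≠ ν := fun h =>
            by have := hc (i - 1) (by omega) h; omega
          have h2 : p.v i ≠ ν := fun h =>
            by have := hc i (by omega) h; omega
          have hne : p.v (i - 1) ≠ p.v i :=
            p.distinct _ _ (by omega) (by omega) (by omega)
          have hsub : {p.v (i - 1), p.v i, ν} ⊆ ι (p.f i) := by
            intro x hx
            simp only [Finset.mem_insert, Finset.mem_singleton] at hx
            rcases hx with rfl | rfl | rfl <;> assumption
          have h3 : ({p.v (i - 1), p.v i, ν} : Finset Volumes).card = 3 := by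
            rw [Finset.card_insert_of_notMem (by simp [hne, h1]),
              Finset.card_insert_of_notMem (by simp [h2]), Finset.card_singleton]
          have := Finset.card_le_card hsub
          have := (hcard (p.f i)).2
          omega
    · rintro ⟨j, hj, hvj, rfl | rfl⟩
      · rw [← hvj]; exact p.mem_left i hj
      · rw [← hvj]; exact p.mem_right j hj
  by_cases hex : ∃ j, j + 1 < m ∧ p.v j = ν
  · obtain ⟨j, hj, hvj⟩ := hex
    have heq : (Finset.range m).filter (fun i => ν ∈ ι (p.f i)) = {j, j + 1} := by
      ext i
      simp only [Finset.mem_filter, Finset.mem_range, Finset.mem_insert,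
        Finset.mem_singleton]
      constructor
      · rintro ⟨hi, hν⟩
        obtain ⟨k, hk, hvk, hik⟩ := (hmem i hi).mp hν
        have : k = j := by
          by_contra hne
          exact p.distinct k j hk hj hne (hvk.trans hvj.symm)
        omega
      · rintro (rfl | rfl)
        · exact ⟨by omega, (hmem i (by omega)).mpr ⟨i, hj, hvj, Or.inl rfl⟩⟩
        · exact ⟨by omega, (hmem (j + 1) (by omega)).mpr ⟨j, hj, hvj, Or.inr rfl⟩⟩
    rw [heq, Finset.card_insert_of_notMem (by simp), Finset.card_singleton]
    exact ⟨1, rfl⟩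
  · have heq : (Finset.range m).filter (fun i => ν ∈ ι (p.f i)) = ∅ := by
      ext i
      simp only [Finset.mem_filter, Finset.mem_range, Finset.notMem_empty, iff_false,
        not_and]
      intro hi hν
      obtain ⟨k, hk, hvk, _⟩ := (hmem i hi).mp hν
      exact hex ⟨k, hk, hvk⟩
    rw [heq]
    simp
end

section
/- Lemma (the X-operator of a boundary equivalence class commutes with all edge checks; first part of Lemma 4 of the paper): Let e be an edge such that the set I e can be arranged into a face path: there is a face path (g₁, …, g_m; ν₁, …, ν_{m−1}) with m ≥ 2 in which the faces g₁, …, g_m are pairwise distinct and {g₁, …, g_m} = I e, such that every boundary face belonging to I e lies in {g₁, g_m} and g₁ is a boundary face if and only if g_m is a boundary face. Then for every boundary face f, the number of faces g ∈ I e with g ≈ f is even (it equals 0 or 2). In particular, for every ≈-equivalence class F_i of boundary faces, (F_i ∩ I e).card is even, so the X-type operator X_{F_i} commutes with the Z-stabilizer B_e. -/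
/-- Two boundary faces are face-equivalent if some face path (of length at least two)
joins them and its `χ`-vector lies in the `Z`-stabilizer subspace. -/
def FaceEquivStep {Faces Volumes Edges : Type*} [DecidableEq Faces]
    (ι : Faces → Finset Volumes) (I : Edges → Finset Faces) (f f' : Faces) : Prop :=
  (ι f).card = 1 ∧ (ι f').card = 1 ∧
    ∃ (m : ℕ), 2 ≤ m ∧ ∃ p : FacePath ι m,
      p.f 0 = f ∧ p.f (m - 1) = f' ∧ chi p.f m ∈ ZStab I

open scoped Classical

/-- First part of Lemma 4: let `e` be an edge such that `I e` can be arranged into a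
face path of pairwise distinct faces whose boundary faces, if any, occur exactly at both
ends.  Then for every boundary face `f`, the number of faces of `I e` equivalent to `f`
(under the equivalence relation `≈` generated by face-equivalence) is even; hence the
`X`-type operator of every equivalence class of boundary faces commutes with the
`Z`-stabilizer `B_e`. -/
theorem edge_overlap_with_boundary_class_even
    {Faces Volumes Edges : Type*} [Fintype Faces] [Fintype Volumes] [Fintype Edges]
    [DecidableEq Faces] [DecidableEq Volumes]
    (ι : Faces → Finset Volumes) (I : Edges → Finset Faces)
    (hcard : ∀ f, 1 ≤ (ι f).card ∧ (ι f).card ≤ 2)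
    (e : Edges)
    (harr : ∃ (m : ℕ), 2 ≤ m ∧ ∃ p : FacePath ι m,
      (∀ i j, i < m → j < m → i ≠ j → p.f i ≠ p.f j) ∧
      (Finset.range m).image p.f = I e ∧
      (∀ g ∈ I e, (ι g).card = 1 → g = p.f 0 ∨ g = p.f (m - 1)) ∧
      ((ι (p.f 0)).card = 1 ↔ (ι (p.f (m - 1))).card = 1)) :
    ∀ f : Faces, (ι f).card = 1 →
      Even (((I e).filter
        (fun g => Relation.EqvGen (FaceEquivStep ι I) g f)).card) := by
  obtain ⟨m, hm, p, hinj, himg, hbdry, hiff⟩ := harr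
  intro f hf
  -- key structural fact about the generated equivalence
  have key : ∀ g f' : Faces, Relation.EqvGen (FaceEquivStep ι I) g f' →
      g = f' ∨ ((ι g).card = 1 ∧ (ι f').card = 1) := by
    intro g f' h
    induction h with
    | rel a b hab => exact Or.inr ⟨hab.1, hab.2.1⟩
    | refl a => exact Or.inl rfl
    | symm a b h ih =>
      rcases ih with h1 | h1
      · exact Or.inl h1.symm
      · exact Or.inr ⟨h1.2, h1.1⟩
    | trans a b c h1 h2 ih1 ih2 =>
      rcases ih1 with e1 | e1
      · rcases ih2 with e2 | e2
        · exact Or.inl (e1.trans e2)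
        · exact Or.inr ⟨e1 ▸ e2.1, e2.2⟩
      · rcases ih2 with e2 | e2
        · exact Or.inr ⟨e1.1, e2 ▸ e1.2⟩
        · exact Or.inr ⟨e1.1, e2.2⟩
  have hm1 : m - 1 < m := Nat.sub_lt (by omega) one_pos
  have h0m : (0 : ℕ) < m := by omega
  have hne : (0 : ℕ) ≠ m - 1 := by omega
  have hmem0 : p.f 0 ∈ I e := by
    rw [← himg]; exact Finset.mem_image.2 ⟨0, Finset.mem_range.2 h0m, rfl⟩
  have hmem1 : p.f (m - 1) ∈ I e := by
    rw [← himg]; exact Finset.mem_image.2 ⟨m - 1, Finset.mem_range.2 hm1, rfl⟩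
  by_cases h0 : (ι (p.f 0)).card = 1
  · -- both endpoints are boundary faces; they are face-equivalent via the path
    have hlast : (ι (p.f (m - 1))).card = 1 := hiff.mp h0
    have hchi : chi p.f m = ind (I e) := by
      funext g
      unfold chi ind
      by_cases hg : g ∈ I e
      · rw [← himg] at hg
        obtain ⟨i, hi, hig⟩ := Finset.mem_image.1 hg
        rw [Finset.mem_range] at hi
        have : (Finset.range m).filter (fun j => p.f j = g) = {i} := by
          ext j
          simp only [Finset.mem_filter, Finset.mem_range, Finset.mem_singleton]
          constructor
          · rintro ⟨hj, hjg⟩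
            by_contra hji
            exact hinj j i hj hi hji (hjg.trans hig.symm)
          · rintro rfl; exact ⟨hi, hig⟩
        rw [this, if_pos (himg ▸ hg)]
        simp
      · have : (Finset.range m).filter (fun j => p.f j = g) = ∅ := by
          ext j
          simp only [Finset.mem_filter, Finset.mem_range, Finset.notMem_empty,
            iff_false, not_and]
          intro hj hjg
          exact hg (himg ▸ Finset.mem_image.2 ⟨j, Finset.mem_range.2 hj, hjg⟩)
        rw [this, if_neg hg]
        simp
    have hstep : FaceEquivStep ι I (p.f 0) (p.f (m - 1)) :=
      ⟨h0, hlast, m, hm, p, rfl, rfl, hchi ▸ Submodule.subset_span ⟨e, rfl⟩⟩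
    have hequiv : Relation.EqvGen (FaceEquivStep ι I) (p.f 0) (p.f (m - 1)) :=
      Relation.EqvGen.rel _ _ hstep
    -- any element of the filtered set is one of the endpoints
    have hsub : ∀ g ∈ I e, Relation.EqvGen (FaceEquivStep ι I) g f →
        g = p.f 0 ∨ g = p.f (m - 1) := by
      intro g hg hgf
      rcases key g f hgf with rfl | ⟨hg1, _⟩
      · exact hbdry g hg hf
      · exact hbdry g hg hg1
    by_cases hE : Relation.EqvGen (FaceEquivStep ι I) (p.f 0) f
    · have hset : (I e).filter (fun g => Relation.EqvGen (FaceEquivStep ι I) g f)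
          = {p.f 0, p.f (m - 1)} := by
        ext g
        simp only [Finset.mem_filter, Finset.mem_insert, Finset.mem_singleton]
        constructor
        · rintro ⟨hg, hgf⟩; exact hsub g hg hgf
        · rintro (rfl | rfl)
          · exact ⟨hmem0, hE⟩
          · exact ⟨hmem1, (hequiv.symm _ _).trans _ _ _ hE⟩
      rw [hset, Finset.card_insert_of_notMem (by
        simp only [Finset.mem_singleton]
        exact hinj 0 (m - 1) h0m hm1 hne), Finset.card_singleton]
      exact even_two
    · have hset : (I e).filter (fun g => Relation.EqvGen (FaceEquivStep ι I) g f)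
          = ∅ := by
        ext g
        simp only [Finset.mem_filter, Finset.notMem_empty, iff_false, not_and]
        intro hg hgf
        rcases hsub g hg hgf with rfl | rfl
        · exact hE hgf
        · exact hE (hequiv.trans _ _ _ hgf)
      rw [hset]
      simp
  · -- no boundary face in I e at all
    have hlast : (ι (p.f (m - 1))).card ≠ 1 := fun h => h0 (hiff.mpr h)
    have hset : (I e).filter (fun g => Relation.EqvGen (FaceEquivStep ι I) g f)
        = ∅ := by
      ext g
      simp only [Finset.mem_filter, Finset.notMem_empty, iff_false, not_and]
      intro hg hgf
      have hg1 : (ι g).card = 1 := by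
        rcases key g f hgf with rfl | ⟨hg1, _⟩
        · exact hf
        · exact hg1
      rcases hbdry g hg hg1 with rfl | rfl
      · exact h0 hg1
      · exact hlast hg1
    rw [hset]
    simp
end

section
/- Lemma (odd overlap of a face path with one boundary class; second part of Lemma 4 of the paper): Let f and f′ be boundary faces with ¬(f ≈ f′), and let (f₁, …, f_m; ν₁, …, ν_{m−1}) with m ≥ 2 be a face path with f₁ = f and f_m = f′. Then there is exactly one index i ∈ {1, …, m} such that f_i is a boundary face satisfying f_i ≈ f (namely i = 1). In particular the number of such indices is odd, so the Z-type operator of this face path anticommutes with the X-type operator supported on the ≈-class of f, and hence that X-type operator is not a stabilizer. -/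
open scoped Classical

/-- Second part of Lemma 4: if `f` and `f'` are inequivalent boundary faces, then along
any face path from `f` to `f'` there is exactly one index whose face is a boundary face
equivalent to `f`, namely the first one.  Hence the `Z`-type operator of the path
anticommutes with the `X`-type operator supported on the `≈`-class of `f`. -/
theorem face_path_odd_overlap_with_boundary_class
    {Faces Volumes Edges : Type*} [Fintype Faces] [Fintype Volumes] [Fintype Edges]
    [DecidableEq Faces] [DecidableEq Volumes]
    (ι : Faces → Finset Volumes) (I : Edges → Finset Faces)
    (hcard : ∀ f, 1 ≤ (ι f).card ∧ (ι f).card ≤ 2)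
    (f f' : Faces) (hf : (ι f).card = 1) (hf' : (ι f').card = 1)
    (hne : ¬ Relation.EqvGen (FaceEquivStep ι I) f f')
    (m : ℕ) (hm : 2 ≤ m) (p : FacePath ι m)
    (h0 : p.f 0 = f) (hlast : p.f (m - 1) = f') :
    (Finset.range m).filter
        (fun i => (ι (p.f i)).card = 1 ∧ Relation.EqvGen (FaceEquivStep ι I) (p.f i) f)
      = {0} := by
  ext i
  simp only [Finset.mem_filter, Finset.mem_range, Finset.mem_singleton]
  constructor
  · rintro ⟨him, hb, heq⟩
    by_contra hi0
    rcases eq_or_ne i (m - 1) with hi | hi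
    · subst hi
      rw [hlast] at heq
      exact hne (Relation.EqvGen.symm _ _ heq)
    · have h1 : i - 1 + 1 < m := by omega
      have h2 : i + 1 < m := by omega
      have hv1 : p.v (i - 1) ∈ ι (p.f i) := by
        have := p.mem_right (i - 1) h1
        rwa [Nat.sub_add_cancel (by omega)] at this
      have hv2 : p.v i ∈ ι (p.f i) := p.mem_left i h2
      have hd : p.v (i - 1) ≠ p.v i := p.distinct _ _ h1 h2 (by omega)
      obtain ⟨x, hx⟩ := Finset.card_eq_one.mp hb
      rw [hx, Finset.mem_singleton] at hv1 hv2
      exact hd (hv1.trans hv2.symm)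
  · rintro rfl
    exact ⟨by omega, by rw [h0]; exact hf, by rw [h0]; exact Relation.EqvGen.refl f⟩
end

section
/- Lemma (stabilizer cut sets, Lemma 12 of the paper, also Lemma 10 for the augmented lattice): Assume every face is incident on exactly two volumes, i.e. (ι f).card = 2 for all f, and that the lattice is connected (any two distinct volumes are joined by a face path). For a set K of faces, K is a cut set if and only if there exists a set V of volumes with V nonempty and V ≠ the set of all volumes such that ∂(V) = {f | (ι f ∩ V).card = 1} ⊆ K. (In toric-code language: a collection of faces is a cut set if and only if it contains the support of a nontrivial X-type stabilizer.) -/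
/-- A face path from a volume `ν₀` to a volume `νm`. -/
def FacePath.FromTo {Faces Volumes : Type*} {ι : Faces → Finset Volumes} {m : ℕ}
    (p : FacePath ι m) (ν₀ νm : Volumes) : Prop :=
  ν₀ ∈ ι (p.f 0) ∧ νm ∈ ι (p.f (m - 1)) ∧ ν₀ ≠ νm ∧
    (∀ i, i + 1 < m → p.v i ≠ ν₀) ∧ (∀ i, i + 1 < m → p.v i ≠ νm)

/-- A set `K` of faces is a cut set if there are two distinct volumes such that every
face path between them contains a face of `K`. -/
def IsCutSet {Faces Volumes : Type*} (ι : Faces → Finset Volumes) (K : Set Faces) : Prop :=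
  ∃ ν ν' : Volumes, ν ≠ ν' ∧
    ∀ (m : ℕ) (p : FacePath ι m), p.FromTo ν ν' → ∃ i < m, p.f i ∈ K

/-- The lattice is connected: any two distinct volumes are joined by a face path. -/
def LatticeConnected {Faces Volumes : Type*} (ι : Faces → Finset Volumes) : Prop :=
  ∀ ν ν' : Volumes, ν ≠ ν' → ∃ (m : ℕ) (p : FacePath ι m), p.FromTo ν ν'

private lemma exists_cross {α : Type*} (V : Set α) (w : ℕ → α) :
    ∀ m : ℕ, w 0 ∈ V → w m ∉ V → ∃ i < m, w i ∈ V ∧ w (i + 1) ∉ V := by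
  intro m
  induction m with
  | zero => intro h0 hm; exact absurd h0 hm
  | succ n ih =>
    intro h0 hm
    by_cases hn : w n ∈ V
    · exact ⟨n, Nat.lt_succ_self n, hn, hm⟩
    · obtain ⟨i, hi, h⟩ := ih h0 hn
      exact ⟨i, hi.trans (Nat.lt_succ_self n), h⟩

/-- Lemma 12 (stabilizer cut sets): if every face is incident on exactly two volumes and
the lattice is connected, then a set `K` of faces is a cut set if and only if it contains
the boundary `∂(V) = {f | (ι f ∩ V).card = 1}` of some nonempty proper set `V` of
volumes, i.e. the support of a nontrivial `X`-type stabilizer. -/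
theorem isCutSet_iff_contains_stabilizer_support
    {Faces Volumes : Type*} [Fintype Faces] [Fintype Volumes] [DecidableEq Volumes]
    (ι : Faces → Finset Volumes)
    (hcard : ∀ f, (ι f).card = 2)
    (hconn : LatticeConnected ι)
    (K : Set Faces) :
    IsCutSet ι K ↔
      ∃ V : Finset Volumes, V.Nonempty ∧ V ≠ Finset.univ ∧
        ∀ f : Faces, ((ι f) ∩ V).card = 1 → f ∈ K := by
  classical
  constructor
  · -- forward direction
    rintro ⟨ν, ν', hne, hcut⟩
    set R : Set Volumes :=
      {μ | μ = ν ∨ ∃ (m : ℕ) (p : FacePath ι m), p.FromTo ν μ ∧ ∀ i < m, p.f i ∉ K} with hR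
    set V : Finset Volumes := Finset.univ.filter (· ∈ R) with hV
    have hmemV : ∀ μ : Volumes, μ ∈ V ↔ μ ∈ R := by
      intro μ; simp [hV]
    have hνV : ν ∈ V := (hmemV ν).2 (Or.inl rfl)
    have hν'V : ν' ∉ V := by
      rw [hmemV]
      rintro (rfl | ⟨m, p, hp, havoid⟩)
      · exact hne rfl
      · obtain ⟨i, him, hiK⟩ := hcut m p hp
        exact havoid i him hiK
    refine ⟨V, ⟨ν, hνV⟩, ?_, ?_⟩
    · intro h; rw [h] at hν'V; exact hν'V (Finset.mem_univ ν')
    · intro f hf1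
      obtain ⟨a, ha⟩ := Finset.card_eq_one.1 hf1
      have haι : a ∈ ι f := (Finset.mem_inter.1 (ha ▸ Finset.mem_singleton_self a)).1
      have haV : a ∈ V := (Finset.mem_inter.1 (ha ▸ Finset.mem_singleton_self a)).2
      obtain ⟨x, y, hxy, hfxy⟩ := Finset.card_eq_two.1 (hcard f)
      have hax : a = x ∨ a = y := by
        have := haι; rw [hfxy] at this; simpa using this
      set b : Volumes := if a = x then y else x with hb
      have hab : a ≠ b := by
        rcases hax with h | h
        · rw [hb, if_pos h, h]; exact hxy
        · have hax' : a ≠ x := by rw [h]; exact hxy.symm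
          rw [hb, if_neg hax', h]; exact hxy.symm
      have hbι : b ∈ ι f := by
        rw [hfxy]
        rcases hax with h | h
        · rw [hb, if_pos h]; simp
        · have hax' : a ≠ x := by rw [h]; exact hxy.symm
          rw [hb, if_neg hax']; simp
      have hbV : b ∉ V := by
        intro hbV
        have : b ∈ ι f ∩ V := Finset.mem_inter.2 ⟨hbι, hbV⟩
        rw [ha, Finset.mem_singleton] at this
        exact hab this.symm
      by_contra hfK
      apply hbV
      rw [hmemV]
      have hbν : b ≠ ν := by
        intro h; rw [h] at hbV; exact hbV hνV
      rcases (hmemV a).1 haV with rfl | ⟨m, p, hp, havoid⟩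
      · -- a = ν : one-step path
        refine Or.inr ⟨1, ⟨fun _ => f, fun _ => a, le_refl 1,
          fun i hi => absurd hi (by omega), fun i hi => absurd hi (by omega),
          fun i j hi => absurd hi (by omega)⟩, ⟨haι, hbι, hab, ?_, ?_⟩, ?_⟩
        · intro i hi; exact absurd hi (by omega)
        · intro i hi; exact absurd hi (by omega)
        · intro i _; exact hfK
      · obtain ⟨hp0, hpm, hpne, hpν, hpa⟩ := hp
        by_cases hbv : ∃ j, j + 1 < m ∧ p.v j = b
        · -- b already appears on the path: truncate
          obtain ⟨j, hjm, hjb⟩ := hbv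
          refine Or.inr ⟨j + 1, ⟨p.f, p.v, by omega,
            fun i hi => p.mem_left i (by omega),
            fun i hi => p.mem_right i (by omega),
            fun i k hi hk => p.distinct i k (by omega) (by omega)⟩,
            ⟨hp0, ?_, hbν.symm, ?_, ?_⟩, ?_⟩
          · show b ∈ ι (p.f (j + 1 - 1))
            rw [Nat.add_sub_cancel]
            have := p.mem_left j hjm
            rwa [hjb] at this
          · intro i hi; exact hpν i (by omega)
          · intro i hi
            have : p.v i ≠ p.v j := p.distinct i j (by omega) hjm (by omega)
            rwa [hjb] at this
          · intro i hi; exact havoid i (by omega)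
        · -- extend the path by one face
          push_neg at hbv
          have hm1 : 1 ≤ m := p.one_le
          refine Or.inr ⟨m + 1,
            ⟨fun i => if i < m then p.f i else f,
             fun i => if i + 1 < m then p.v i else a, by omega,
             ?_, ?_, ?_⟩, ⟨?_, ?_, hbν.symm, ?_, ?_⟩, ?_⟩
          · -- mem_left
            intro i hi
            show (if i + 1 < m then p.v i else a) ∈ ι (if i < m then p.f i else f)
            by_cases h : i + 1 < m
            · rw [if_pos h, if_pos (by omega : i < m)]
              exact p.mem_left i h
            · have hieq : i = m - 1 := by omega
              rw [if_neg h, if_pos (by omega : i < m), hieq]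
              exact hpm
          · -- mem_right
            intro i hi
            show (if i + 1 < m then p.v i else a) ∈ ι (if i + 1 < m then p.f (i + 1) else f)
            by_cases h : i + 1 < m
            · rw [if_pos h, if_pos h]
              exact p.mem_right i h
            · rw [if_neg h, if_neg (by omega : ¬ i + 1 < m)]
              exact haι
          · -- distinct
            intro i j hi hj hij
            show (if i + 1 < m then p.v i else a) ≠ (if j + 1 < m then p.v j else a)
            by_cases h1 : i + 1 < m <;> by_cases h2 : j + 1 < m
            · rw [if_pos h1, if_pos h2]; exact p.distinct i j h1 h2 hij
            · rw [if_pos h1, if_neg h2]; exact hpa i h1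
            · rw [if_neg h1, if_pos h2]; exact (hpa j h2).symm
            · exact absurd (by omega : i = j) hij
          · -- ν ∈ ι (f' 0)
            show ν ∈ ι (if 0 < m then p.f 0 else f)
            rw [if_pos (by omega : 0 < m)]; exact hp0
          · -- b ∈ ι (f' (m + 1 - 1))
            show b ∈ ι (if m + 1 - 1 < m then p.f (m + 1 - 1) else f)
            rw [Nat.add_sub_cancel, if_neg (lt_irrefl m)]
            exact hbι
          · -- v' i ≠ ν
            intro i hi
            show (if i + 1 < m then p.v i else a) ≠ ν
            by_cases h : i + 1 < m
            · rw [if_pos h]; exact hpν i h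
            · rw [if_neg h]; exact hpne.symm
          · -- v' i ≠ b
            intro i hi
            show (if i + 1 < m then p.v i else a) ≠ b
            by_cases h : i + 1 < m
            · rw [if_pos h]; exact hbv i h
            · rw [if_neg h]; exact hab
          · -- avoid K
            intro i hi
            show (if i < m then p.f i else f) ∉ K
            by_cases h : i < m
            · rw [if_pos h]; exact havoid i h
            · rw [if_neg h]; exact hfK
  · -- reverse direction
    rintro ⟨V, ⟨ν, hν⟩, hVuniv, hbd⟩
    obtain ⟨ν', hν'⟩ : ∃ ν', ν' ∉ V := by
      by_contra h
      push_neg at h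
      exact hVuniv (Finset.eq_univ_iff_forall.2 h)
    have hνν' : ν ≠ ν' := fun h => hν' (h ▸ hν)
    refine ⟨ν, ν', hνν', ?_⟩
    intro m p hp
    obtain ⟨hp0, hpm, hpne, hpν, hpν'⟩ := hp
    have hm1 : 1 ≤ m := p.one_le
    set w : ℕ → Volumes := fun i => if i = 0 then ν else if i < m then p.v (i - 1) else ν'
      with hw
    have hw0 : w 0 = ν := by simp [hw]
    have hwm : w m = ν' := by
      have h1 : m ≠ 0 := by omega
      simp [hw, h1]
    obtain ⟨i, him, hiV, hi1V⟩ := exists_cross (↑V : Set Volumes) w m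
      (by rw [hw0]; simpa using hν) (by rw [hwm]; simpa using hν')
    refine ⟨i, him, ?_⟩
    apply hbd
    have h1 : w i ∈ ι (p.f i) := by
      by_cases h : i = 0
      · rw [h, hw0]; exact hp0
      · have : w i = p.v (i - 1) := by
          rw [hw]; simp only [if_neg h, if_pos him]
        rw [this]
        have := p.mem_right (i - 1) (by omega)
        rwa [(by omega : i - 1 + 1 = i)] at this
    have h2 : w (i + 1) ∈ ι (p.f i) := by
      by_cases h : i + 1 < m
      · have : w (i + 1) = p.v i := by
          rw [hw]; simp only [if_neg (by omega : ¬ i + 1 = 0), if_pos h, Nat.add_sub_cancel]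
        rw [this]
        exact p.mem_left i h
      · have hieq : i = m - 1 := by omega
        have : w (i + 1) = ν' := by
          rw [hw]; simp only [if_neg (by omega : ¬ i + 1 = 0), if_neg h]
        rw [this, hieq]
        exact hpm
    have hne2 : w i ≠ w (i + 1) := by
      intro h; exact hi1V (h ▸ hiV)
    have hsub : ({w i, w (i + 1)} : Finset Volumes) ⊆ ι (p.f i) := by
      intro x hx
      rcases Finset.mem_insert.1 hx with h | h
      · rw [h]; exact h1
      · rw [Finset.mem_singleton.1 h]; exact h2
    have heq : ι (p.f i) = {w i, w (i + 1)} := by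
      refine (Finset.eq_of_subset_of_card_le hsub ?_).symm
      rw [hcard, Finset.card_insert_of_notMem (by simpa using hne2), Finset.card_singleton]
    rw [heq]
    have hint : ({w i, w (i + 1)} : Finset Volumes) ∩ V = {w i} := by
      ext x
      simp only [Finset.mem_inter, Finset.mem_insert, Finset.mem_singleton]
      constructor
      · rintro ⟨h | h, hx⟩
        · exact h
        · rw [h] at hx
          exact absurd hx (by simpa using hi1V)
      · rintro rfl
        exact ⟨Or.inl rfl, by simpa using hiV⟩
    rw [hint, Finset.card_singleton]
end

section
/- Lemma (stabilizers whose support is not a cut set lie on the boundary; first part of Lemma 5 of the paper): Assume 1 ≤ (ι f).card ≤ 2 for every face f and that the lattice is connected (any two distinct volumes are joined by a face path). Let V be a set of volumes and let ∂(V) = {f | (ι f ∩ V).card is odd} be the support of the X-type stabilizer ∏_{ν ∈ V} A_ν. If ∂(V) is not a cut set, then every face f ∈ ∂(V) satisfies (ι f).card = 1, i.e. the support of the stabilizer consists only of boundary faces. -/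
/-- First part of Lemma 5: if the support `∂(V) = {f | (ι f ∩ V).card odd}` of the
`X`-type stabilizer `∏_{ν ∈ V} A_ν` is not a cut set, then it consists only of boundary
faces, i.e. faces incident on exactly one volume. -/
theorem stabilizer_support_not_cutset_subset_boundary
    {Faces Volumes : Type*} [Fintype Faces] [Fintype Volumes] [DecidableEq Volumes]
    (ι : Faces → Finset Volumes)
    (hcard : ∀ f, 1 ≤ (ι f).card ∧ (ι f).card ≤ 2)
    (hconn : LatticeConnected ι)
    (V : Finset Volumes)
    (hnotcut : ¬ IsCutSet ι {f : Faces | Odd ((ι f ∩ V).card)}) :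
    ∀ f : Faces, Odd ((ι f ∩ V).card) → (ι f).card = 1 := by
  intro f hf
  by_contra hne
  have h2 : (ι f).card = 2 := by have := hcard f; omega
  have hint : (ι f ∩ V).card = 1 := by
    have hle : (ι f ∩ V).card ≤ 2 :=
      le_trans (Finset.card_le_card Finset.inter_subset_left) (hcard f).2
    obtain ⟨k, hk⟩ := hf
    omega
  obtain ⟨a, ha⟩ := Finset.card_eq_one.mp hint
  have hamem : a ∈ ι f ∩ V := ha ▸ Finset.mem_singleton_self a
  have haι : a ∈ ι f := (Finset.mem_inter.mp hamem).1
  have haV : a ∈ V := (Finset.mem_inter.mp hamem).2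
  obtain ⟨b, hbι, hba⟩ : ∃ b ∈ ι f, b ≠ a := by
    by_contra h
    push_neg at h
    have hsub : ι f ⊆ {a} := fun x hx => Finset.mem_singleton.mpr (h x hx)
    have := Finset.card_le_card hsub
    simp only [Finset.card_singleton] at this
    omega
  have hbV : b ∉ V := by
    intro hbV
    have : b ∈ ι f ∩ V := Finset.mem_inter.mpr ⟨hbι, hbV⟩
    rw [ha] at this
    exact hba (Finset.mem_singleton.mp this)
  apply hnotcut
  refine ⟨a, b, fun h => hbV (h ▸ haV), ?_⟩
  intro m p hp
  by_contra hK
  push_neg at hK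
  have hEven : ∀ i < m, Even ((ι (p.f i) ∩ V).card) := by
    intro i hi
    have := hK i hi
    simp only [Set.mem_setOf_eq] at this
    exact Nat.not_odd_iff_even.mp this
  obtain ⟨h1, h2', h3, h4, h5⟩ := hp
  have hm1 : 1 ≤ m := p.one_le
  set w : ℕ → Volumes := fun i => if i = 0 then a else if i < m then p.v (i - 1) else b
    with hw
  have hw0 : w 0 = a := by simp [hw]
  have hwm : w m = b := by simp [hw]; omega
  have mem1 : ∀ i < m, w i ∈ ι (p.f i) := by
    intro i hi
    rcases Nat.eq_zero_or_pos i with h0 | h0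
    · subst h0; rw [hw0]; exact h1
    · have : w i = p.v (i - 1) := by
        simp only [hw]
        rw [if_neg (by omega : ¬ i = 0), if_pos hi]
      rw [this]
      have := p.mem_right (i - 1) (by omega)
      have heq : i - 1 + 1 = i := by omega
      rwa [heq] at this
  have mem2 : ∀ i < m, w (i + 1) ∈ ι (p.f i) := by
    intro i hi
    rcases Nat.lt_or_ge (i + 1) m with h0 | h0
    · have : w (i + 1) = p.v i := by simp [hw]; omega
      rw [this]; exact p.mem_left i h0
    · have him : i = m - 1 := by omega
      have : w (i + 1) = b := by simp [hw]; omega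
      rw [this, him]; exact h2'
  have hneq : ∀ i < m, w i ≠ w (i + 1) := by
    intro i hi
    rcases Nat.eq_zero_or_pos i with h0 | h0
    · subst h0
      rcases Nat.lt_or_ge 1 m with h1m | h1m
      · have : w 1 = p.v 0 := by simp [hw]; omega
        rw [hw0, this]
        exact fun h => h4 0 h1m h.symm
      · have : w 1 = b := by simp [hw]; omega
        rw [hw0, this]
        exact fun h => hbV (h ▸ haV)
    · have hwi : w i = p.v (i - 1) := by
        simp only [hw]
        rw [if_neg (by omega : ¬ i = 0), if_pos hi]
      rcases Nat.lt_or_ge (i + 1) m with h0' | h0'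
      · have : w (i + 1) = p.v i := by simp [hw]; omega
        rw [hwi, this]
        exact p.distinct (i - 1) i (by omega) h0' (by omega)
      · have : w (i + 1) = b := by simp [hw]; omega
        rw [hwi, this]
        exact h5 (i - 1) (by omega)
  have key : ∀ i < m, (w i ∈ V ↔ w (i + 1) ∈ V) := by
    intro i hi
    have hx := mem1 i hi
    have hy := mem2 i hi
    have hxy := hneq i hi
    have hset : ι (p.f i) = {w i, w (i + 1)} := by
      apply (Finset.eq_of_subset_of_card_le ?_ ?_).symm
      · intro z hz
        rcases Finset.mem_insert.mp hz with h | h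
        · subst h; exact hx
        · rw [Finset.mem_singleton.mp h]; exact hy
      · rw [Finset.card_insert_of_notMem (by simpa using hxy), Finset.card_singleton]
        exact (hcard (p.f i)).2
    have hEv := hEven i hi
    rw [hset] at hEv
    by_cases hx' : w i ∈ V <;> by_cases hy' : w (i + 1) ∈ V
    · tauto
    · exfalso
      have : ({w i, w (i + 1)} : Finset Volumes) ∩ V = {w i} := by
        ext z
        simp only [Finset.mem_inter, Finset.mem_insert, Finset.mem_singleton]
        constructor
        · rintro ⟨h | h, hV⟩
          · exact h
          · exact absurd (h ▸ hV) hy'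
        · rintro rfl; exact ⟨Or.inl rfl, hx'⟩
      rw [this, Finset.card_singleton] at hEv
      exact (Nat.not_even_iff_odd.mpr (by norm_num)) hEv
    · exfalso
      have : ({w i, w (i + 1)} : Finset Volumes) ∩ V = {w (i + 1)} := by
        ext z
        simp only [Finset.mem_inter, Finset.mem_insert, Finset.mem_singleton]
        constructor
        · rintro ⟨h | h, hV⟩
          · exact absurd (h ▸ hV) hx'
          · exact h
        · rintro rfl; exact ⟨Or.inr rfl, hy'⟩
      rw [this, Finset.card_singleton] at hEv
      exact (Nat.not_even_iff_odd.mpr (by norm_num)) hEv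
    · tauto
  have chain : ∀ i ≤ m, (w i ∈ V) := by
    intro i hi
    induction i with
    | zero => rw [hw0]; exact haV
    | succ n ih =>
      have hn : n < m := by omega
      exact (key n hn).mp (ih (by omega))
  have := chain m le_rfl
  rw [hwm] at this
  exact hbV this
end

section
/- Lemma (logical operators whose support is not a cut set lie on the boundary; second part of Lemma 5 of the paper): Assume 1 ≤ (ι f).card ≤ 2 for every face f and that the lattice is connected. Assume further (no interior boundaries, condition L1): for every face f with ι f = {ν, ν′} of cardinality 2 and every face path ρ from ν to ν′, the vector χ(ρ) + 1_{{f}} lies in the Z-stabilizer subspace. Let M be a set of faces such that (M ∩ I e).card is even for every edge e (i.e. the X-type operator X_M commutes with every Z-stabilizer B_e, so it is a stabilizer or a logical operator). If M is not a cut set, then every face f ∈ M satisfies (ι f).card = 1. -/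
/-- Second part of Lemma 5: assume the lattice is connected and has no interior
boundaries (condition L1: for every face `f` incident on two volumes `ν, ν'` and every
face path `ρ` from `ν` to `ν'`, the vector `χ(ρ) + 1_{{f}}` is in the `Z`-stabilizer
subspace).  If `M` is the support of an `X`-type operator commuting with every
`Z`-stabilizer (i.e. `(M ∩ I e).card` is even for every edge `e`) and `M` is not a cut
set, then every face of `M` is a boundary face. -/
theorem operator_support_not_cutset_subset_boundary
    {Faces Volumes Edges : Type*} [Fintype Faces] [Fintype Volumes] [Fintype Edges]
    [DecidableEq Faces] [DecidableEq Volumes]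
    (ι : Faces → Finset Volumes) (I : Edges → Finset Faces)
    (hcard : ∀ f, 1 ≤ (ι f).card ∧ (ι f).card ≤ 2)
    (hconn : LatticeConnected ι)
    (hL1 : ∀ (f : Faces) (ν ν' : Volumes), ν ≠ ν' → ι f = {ν, ν'} →
      ∀ (m : ℕ) (p : FacePath ι m), p.FromTo ν ν' →
        chi p.f m + ind ({f} : Finset Faces) ∈ ZStab I)
    (M : Finset Faces)
    (hcomm : ∀ e : Edges, Even ((M ∩ I e).card))
    (hnotcut : ¬ IsCutSet ι (↑M : Set Faces)) :
    ∀ f ∈ M, (ι f).card = 1 := by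
  intro f hf
  obtain ⟨h1, h2⟩ := hcard f
  by_contra hne1
  have h2' : (ι f).card = 2 := by omega
  obtain ⟨ν, ν', hνν, hιf⟩ := Finset.card_eq_two.mp h2'
  simp only [IsCutSet, not_exists] at hnotcut
  have hn := hnotcut ν ν'
  push_neg at hn
  obtain ⟨m, p, hfromto, hiavoid⟩ := hn hνν
  have hx := hL1 f ν ν' hνν hιf m p hfromto
  -- the pairing with M vanishes on the stabilizer subspace
  have hzero : ∀ x ∈ ZStab I, ∑ g ∈ M, x g = 0 := by
    intro x hx
    induction hx using Submodule.span_induction with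
    | mem x hmem =>
        obtain ⟨e, rfl⟩ := hmem
        have hsum : ∑ g ∈ M, ind (I e) g = ((M ∩ I e).card : ZMod 2) := by
          simp only [ind]
          rw [Finset.sum_ite_mem, Finset.card_eq_sum_ones]
          push_cast
          rfl
        rw [hsum]
        obtain ⟨k, hk⟩ := hcomm e
        rw [hk]
        push_cast
        ring_nf
        simp [show (2 : ZMod 2) = 0 from rfl]
    | zero => simp
    | add x y hx hy ihx ihy => simp [Finset.sum_add_distrib, ihx, ihy]
    | smul a x hx ih =>
        simp only [Pi.smul_apply, smul_eq_mul, ← Finset.mul_sum, ih, mul_zero]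
  have h0 := hzero _ hx
  have hchi : ∀ g ∈ M, chi p.f m g = 0 := by
    intro g hg
    have : (Finset.range m).filter (fun i => p.f i = g) = ∅ := by
      apply Finset.filter_eq_empty_iff.mpr
      intro i hi hfe
      exact hiavoid i (Finset.mem_range.mp hi) (hfe ▸ hg)
    simp [chi, this]
  have hindf : ∑ g ∈ M, ind ({f} : Finset Faces) g = 1 := by
    simp only [ind, Finset.mem_singleton]
    rw [Finset.sum_ite_eq' M f (fun _ => (1 : ZMod 2))]
    simp [hf]
  rw [show (chi p.f m + ind ({f} : Finset Faces)) = fun g => chi p.f m g + ind {f} g from rfl] at h0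
  rw [Finset.sum_add_distrib, Finset.sum_congr rfl hchi, hindf] at h0
  simp at h0
end

section
/- Theorem (unique solution within the explored set, Theorem 9 of the paper, with the properties of the explored set from Lemma 8 as hypotheses): Let F and E be finite types and σ : (F → ZMod 2) →ₗ[ZMod 2] (E → ZMod 2) a linear map. Let 𝓔 ⊆ F be a set such that: (i) no nonzero x ∈ ker σ has supp x ⊆ 𝓔 (𝓔 supports no stabilizer or logical operator), and (ii) for every f ∉ 𝓔 there exists v ∈ ker σ with supp v ⊆ 𝓔 ∪ {f} and v f = 1 (adding any further face creates a stabilizer or logical operator through it). Then for every x₀ : F → ZMod 2 there exists a unique x : F → ZMod 2 with supp x ⊆ 𝓔 and σ x = σ x₀. -/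
/-- Theorem 9 (unique solution within the explored set): let `σ` be the syndrome map of
the 3D toric code for bit-flip errors.  If the explored set `𝓔` supports no nonzero
element of `ker σ` (no stabilizer or logical operator), and adding any further face `f`
creates an element of `ker σ` supported in `𝓔 ∪ {f}` and passing through `f`, then for
every error `x₀` there is a unique `x` supported in `𝓔` with the same syndrome. -/
theorem unique_error_in_explored_set
    {F E : Type*} [Fintype F] [Fintype E]
    (σ : (F → ZMod 2) →ₗ[ZMod 2] (E → ZMod 2)) (𝓔 : Set F)
    (h1 : ∀ x ∈ LinearMap.ker σ, x ≠ 0 → ¬ Function.support x ⊆ 𝓔)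
    (h2 : ∀ f ∉ 𝓔, ∃ v ∈ LinearMap.ker σ,
      Function.support v ⊆ 𝓔 ∪ {f} ∧ v f = 1) :
    ∀ x₀ : F → ZMod 2, ∃! x : F → ZMod 2,
      Function.support x ⊆ 𝓔 ∧ σ x = σ x₀ := by
  classical
  choose v hvker hvsupp hvf using h2
  intro x₀
  set w : F → (F → ZMod 2) := fun f =>
    if h : f ∉ 𝓔 then x₀ f • v f h else 0 with hw
  have hwk : ∀ f, w f ∈ LinearMap.ker σ := by
    intro f
    simp only [hw]
    split
    · exact Submodule.smul_mem _ _ (hvker _ _)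
    · exact Submodule.zero_mem _
  set x : F → ZMod 2 := x₀ + ∑ f, w f with hx
  refine ⟨x, ⟨?_, ?_⟩, ?_⟩
  · -- support ⊆ 𝓔
    intro g hg
    by_contra hgE
    apply hg
    have hsum : ∀ f, f ≠ g → w f g = 0 := by
      intro f hfg
      simp only [hw]
      split
      · rename_i hf
        have : g ∉ Function.support (v f hf) := by
          intro hmem
          rcases hvsupp f hf hmem with h | h
          · exact hgE h
          · exact hfg h.symm
        simp only [Function.mem_support, not_not] at this
        simp [Pi.smul_apply, this]
      · rfl
    have : x g = x₀ g + w g g := by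
      simp only [hx, Pi.add_apply, Finset.sum_apply]
      rw [Finset.sum_eq_single g (fun f _ hf => hsum f hf) (by simp)]
    rw [this]
    have : w g g = x₀ g := by
      simp only [hw, dif_pos hgE, Pi.smul_apply, hvf g hgE, smul_eq_mul, mul_one]
    rw [this]
    exact CharTwo.add_self_eq_zero _
  · -- same syndrome
    have : σ (∑ f, w f) = 0 := by
      rw [map_sum]
      refine Finset.sum_eq_zero fun f _ => ?_
      exact (LinearMap.mem_ker).mp (hwk f)
    rw [hx, map_add, this, add_zero]
  · -- uniqueness
    intro y ⟨hys, hyσ⟩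
    by_contra hne
    have hd : y - x ∈ LinearMap.ker σ := by
      rw [LinearMap.mem_ker, map_sub, hyσ]
      have hxs : σ x = σ x₀ := by
        have : σ (∑ f, w f) = 0 := by
          rw [map_sum]
          exact Finset.sum_eq_zero fun f _ => (LinearMap.mem_ker).mp (hwk f)
        rw [hx, map_add, this, add_zero]
      rw [hxs, sub_self]
    have hdne : y - x ≠ 0 := sub_ne_zero.mpr hne
    apply h1 _ hd hdne
    intro g hg
    simp only [Function.mem_support, Pi.sub_apply] at hg
    by_cases hy : y g = 0
    · have hx0 : x g ≠ 0 := by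
        intro h; apply hg; rw [hy, h, sub_zero]
      -- need supp x ⊆ 𝓔; prove it the same way as above
      by_contra hgE
      apply hx0
      have hsum : ∀ f, f ≠ g → w f g = 0 := by
        intro f hfg
        simp only [hw]
        split
        · rename_i hf
          have : g ∉ Function.support (v f hf) := by
            intro hmem
            rcases hvsupp f hf hmem with h | h
            · exact hgE h
            · exact hfg h.symm
          simp only [Function.mem_support, not_not] at this
          simp [Pi.smul_apply, this]
        · rfl
      have h1' : x g = x₀ g + w g g := by
        simp only [hx, Pi.add_apply, Finset.sum_apply]
        rw [Finset.sum_eq_single g (fun f _ hf => hsum f hf) (by simp)]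
      have h2' : w g g = x₀ g := by
        simp only [hw, dif_pos hgE, Pi.smul_apply, hvf g hgE, smul_eq_mul, mul_one]
      rw [h1', h2']
      exact CharTwo.add_self_eq_zero _
    · exact hys hy
end

section
/- Lemma (existence of an artificial boundary, Lemma 13 of the paper, abstract form): Let F be a finite type and let S ≤ K be subspaces of the ℤ/2-vector space F → ZMod 2 (S the space of X-stabilizer supports, K the space of supports of X-type operators commuting with every Z-check). Then there exists a set X ⊆ F such that: (i) for every k ∈ K there exists k′ ∈ K with k − k′ ∈ S and supp k′ ⊆ X (every logical class has a representative supported in X), and (ii) no nonzero s ∈ S satisfies supp s ⊆ X (X does not contain the support of a nontrivial stabilizer). -/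
/-- Lemma 13 (existence of an artificial boundary), abstract form: given subspaces
`S ≤ K` of `F → ZMod 2` (`S` the space of `X`-stabilizer supports, `K` the space of
supports of `X`-type operators commuting with every `Z`-check), there is a set `X` of
faces such that every class of `K` modulo `S` has a representative supported in `X`,
while `X` does not contain the support of any nonzero element of `S`. -/
theorem artificial_boundary_exists
    {F : Type*} [Fintype F]
    (S K : Submodule (ZMod 2) (F → ZMod 2)) (hSK : S ≤ K) :
    ∃ X : Set F,
      (∀ k ∈ K, ∃ k' ∈ K, k - k' ∈ S ∧ Function.support k' ⊆ X) ∧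
      (∀ s ∈ S, s ≠ 0 → ¬ Function.support s ⊆ X) := by
  classical
  set P : Finset F → Prop := fun X =>
    ∀ k ∈ K, ∃ k' ∈ K, k - k' ∈ S ∧ Function.support k' ⊆ ↑X with hP
  have hex : ∃ n : ℕ, ∃ X : Finset F, X.card = n ∧ P X :=
    ⟨_, Finset.univ, rfl, fun k hk => ⟨k, hk, by simp, by simp⟩⟩
  obtain ⟨X, hcard, hPX⟩ := Nat.find_spec hex
  refine ⟨↑X, hPX, ?_⟩
  intro s hs hs0 hsub
  obtain ⟨f, hf⟩ := Function.ne_iff.mp hs0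
  simp only [Pi.zero_apply] at hf
  have hfX : f ∈ X := hsub hf
  have hPerase : P (X.erase f) := by
    intro k hk
    obtain ⟨k', hk', hdiff, hsupp⟩ := hPX k hk
    by_cases hkf : k' f = 0
    · refine ⟨k', hk', hdiff, fun x hx => ?_⟩
      have hxX : x ∈ X := hsupp hx
      have hxf : x ≠ f := fun h => hx (h ▸ hkf)
      exact Finset.mem_coe.mpr (Finset.mem_erase.mpr ⟨hxf, hxX⟩)
    · refine ⟨k' - s, sub_mem hk' (hSK hs), ?_, ?_⟩
      · have : k - (k' - s) = (k - k') + s := by ring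
        rw [this]
        exact add_mem hdiff hs
      · intro x hx
        have hx' : k' x - s x ≠ 0 := hx
        have hxf : x ≠ f := by
          intro h
          subst h
          apply hx'
          have hall : ∀ a : ZMod 2, a ≠ 0 → a = 1 := by decide
          have h1 : k' x = 1 := hall _ hkf
          have h2 : s x = 1 := hall _ hf
          rw [h1, h2, sub_self]
        have hxX : x ∈ X := by
          by_cases h : k' x = 0
          · exact hsub (by simpa [h] using hx')
          · exact hsupp h
        exact Finset.mem_coe.mpr (Finset.mem_erase.mpr ⟨hxf, hxX⟩)
  have hlt : (X.erase f).card < Nat.find hex := by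
    rw [← hcard]
    exact Finset.card_erase_lt_of_mem hfX
  exact Nat.find_min hex hlt ⟨X.erase f, rfl, hPerase⟩
end

section
/- Lemma (detecting logical operators outside the artificial boundary, Lemma 14 of the paper, abstract form): Let F be a finite type and S ≤ K subspaces of F → ZMod 2. Let X ⊆ F satisfy: for every k ∈ K there exists k′ ∈ K with k − k′ ∈ S and supp k′ ⊆ X. Let 𝓔 ⊆ F with 𝓔 ∩ X = ∅, and suppose v ∈ K with v ∉ S and supp v ⊆ 𝓔 (a logical operator supported in 𝓔). Then there exists a nonzero s ∈ S with supp s ⊆ 𝓔 ∪ X (so 𝓔 ∪ X contains the support of a nontrivial stabilizer, hence is a cut set). -/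
/-- Lemma 14 (detecting logical operators outside the artificial boundary), abstract
form: let `S ≤ K` be subspaces of `F → ZMod 2` (`S` the `X`-stabilizer supports, `K` the
supports of `X`-type operators commuting with every `Z`-check), and let `X` be a set of
faces in which every class of `K` modulo `S` has a representative.  If `𝓔` is disjoint
from `X` and supports a logical operator `v ∈ K \ S`, then `𝓔 ∪ X` contains the support
of a nonzero stabilizer `s ∈ S` (hence is a cut set). -/
theorem logical_in_explored_set_gives_stabilizer
    {F : Type*} [Fintype F]
    (S K : Submodule (ZMod 2) (F → ZMod 2)) (hSK : S ≤ K)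
    (X : Set F)
    (hX : ∀ k ∈ K, ∃ k' ∈ K, k - k' ∈ S ∧ Function.support k' ⊆ X)
    (𝓔 : Set F) (hdisj : 𝓔 ∩ X = ∅)
    (v : F → ZMod 2) (hvK : v ∈ K) (hvS : v ∉ S)
    (hsupp : Function.support v ⊆ 𝓔) :
    ∃ s ∈ S, s ≠ 0 ∧ Function.support s ⊆ 𝓔 ∪ X := by
  obtain ⟨k', hk'K, hsS, hk'X⟩ := hX v hvK
  refine ⟨v - k', hsS, ?_, ?_⟩
  · intro h0
    have hvk : v = k' := by
      have := sub_eq_zero.mp h0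
      exact this
    apply hvS
    have hv0 : v = 0 := by
      funext f
      by_contra hf
      have hf𝓔 : f ∈ 𝓔 := hsupp hf
      have hfX : f ∈ X := hk'X (by rw [hvk] at hf; exact hf)
      have : f ∈ 𝓔 ∩ X := ⟨hf𝓔, hfX⟩
      simp [hdisj] at this
    rw [hv0]; exact S.zero_mem
  · intro f hf
    simp only [Function.mem_support, Pi.sub_apply] at hf
    by_cases hvf : v f = 0
    · right
      apply hk'X
      simp only [Function.mem_support]
      intro h; apply hf; rw [hvf, h, sub_zero]
    · exact Or.inl (hsupp hvf)
end

section
/- Theorem (projection of the error onto the artificial boundary, Theorem 16 of the paper, with the properties from Lemma 15 as hypotheses): Let F and E be finite types and σ : (F → ZMod 2) →ₗ[ZMod 2] (E → ZMod 2) a linear map. Let X, 𝓔 ⊆ F be disjoint sets such that: (i) every nonzero v ∈ ker σ with supp v ⊆ 𝓔 ∪ X satisfies supp v ⊆ X, and (ii) for every f ∉ 𝓔 ∪ X there exists v ∈ ker σ with supp v ⊆ 𝓔 ∪ X ∪ {f} and v f = 1. Then: (a) Existence: for every x₀ : F → ZMod 2 there exists x with supp x ⊆ 𝓔 ∪ X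 and σ x = σ x₀; (b) Uniqueness up to X: if x₁, x₂ both have support contained in 𝓔 ∪ X and σ x₁ = σ x₂, then x₁ f = x₂ f for every f ∉ X (equivalently supp(x₁ − x₂) ⊆ X). -/
/-- Theorem 16 (projection of the error onto the artificial boundary): let `σ` be the
syndrome map of the 3D toric code for bit-flip errors, `X` an artificial boundary and
`𝓔` the explored set, with `𝓔 ∩ X = ∅`.  Assume every nonzero element of `ker σ`
supported in `𝓔 ∪ X` is in fact supported in `X`, and adding any further face `f`
creates an element of `ker σ` supported in `𝓔 ∪ X ∪ {f}` passing through `f`.  Then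
every error has an equivalent representative supported in `𝓔 ∪ X`, and any two such
representatives agree outside `X`. -/
theorem error_projection_onto_boundary
    {F E : Type*} [Fintype F] [Fintype E]
    (σ : (F → ZMod 2) →ₗ[ZMod 2] (E → ZMod 2)) (X 𝓔 : Set F)
    (hdisj : 𝓔 ∩ X = ∅)
    (h1 : ∀ v ∈ LinearMap.ker σ, v ≠ 0 →
      Function.support v ⊆ 𝓔 ∪ X → Function.support v ⊆ X)
    (h2 : ∀ f ∉ 𝓔 ∪ X, ∃ v ∈ LinearMap.ker σ,
      Function.support v ⊆ 𝓔 ∪ X ∪ {f} ∧ v f = 1) :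
    (∀ x₀ : F → ZMod 2, ∃ x : F → ZMod 2,
        Function.support x ⊆ 𝓔 ∪ X ∧ σ x = σ x₀) ∧
    (∀ x₁ x₂ : F → ZMod 2, Function.support x₁ ⊆ 𝓔 ∪ X →
        Function.support x₂ ⊆ 𝓔 ∪ X → σ x₁ = σ x₂ →
        ∀ f ∉ X, x₁ f = x₂ f) := by
  classical
  constructor
  · -- existence: strong induction on the number of support points outside 𝓔 ∪ X
    have key : ∀ n : ℕ, ∀ x₀ : F → ZMod 2,
        (Set.toFinset (Function.support x₀ \ (𝓔 ∪ X))).card = n →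
        ∃ x : F → ZMod 2, Function.support x ⊆ 𝓔 ∪ X ∧ σ x = σ x₀ := by
      intro n
      induction n using Nat.strong_induction_on with
      | _ n ih =>
        intro x₀ hn
        by_cases hsub : Function.support x₀ ⊆ 𝓔 ∪ X
        · exact ⟨x₀, hsub, rfl⟩
        · obtain ⟨f, hf_supp, hf_out⟩ := Set.not_subset.mp hsub
          obtain ⟨v, hvker, hvsupp, hvf⟩ := h2 f hf_out
          set x' := x₀ + v with hx'
          have hσ : σ x' = σ x₀ := by
            simp [hx', map_add, LinearMap.mem_ker.mp hvker]
          have hx'f : x' f = 0 := by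
            have : x₀ f = 1 := by
              have h0 : x₀ f ≠ 0 := hf_supp
              revert h0; generalize x₀ f = a; revert a; decide
            simp [hx', this, hvf]; decide
          have hsub' : Set.toFinset (Function.support x' \ (𝓔 ∪ X)) ⊆
              (Set.toFinset (Function.support x₀ \ (𝓔 ∪ X))).erase f := by
            intro g hg
            simp only [Set.mem_toFinset, Set.mem_diff, Function.mem_support] at hg
            rw [Finset.mem_erase]
            constructor
            · rintro rfl
              exact hg.1 hx'f
            · simp only [Set.mem_toFinset, Set.mem_diff, Function.mem_support]
              refine ⟨?_, hg.2⟩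
              intro hg0
              have hvg : v g = 0 := by
                by_contra hvg
                have := hvsupp hvg
                rcases this with h | h
                · exact hg.2 h
                · rw [Set.mem_singleton_iff] at h
                  subst h
                  exact hg.1 hx'f
              apply hg.1
              simp [hx', hg0, hvg]
          have hlt : (Set.toFinset (Function.support x' \ (𝓔 ∪ X))).card < n := by
            calc (Set.toFinset (Function.support x' \ (𝓔 ∪ X))).card
                ≤ ((Set.toFinset (Function.support x₀ \ (𝓔 ∪ X))).erase f).card :=
                  Finset.card_le_card hsub'
              _ < (Set.toFinset (Function.support x₀ \ (𝓔 ∪ X))).card := by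
                  apply Finset.card_erase_lt_of_mem
                  simp only [Set.mem_toFinset, Set.mem_diff, Function.mem_support]
                  exact ⟨hf_supp, hf_out⟩
              _ = n := hn
          obtain ⟨x, hx1, hx2⟩ := ih _ hlt x' rfl
          exact ⟨x, hx1, hx2.trans hσ⟩
    intro x₀
    exact key _ x₀ rfl
  · intro x₁ x₂ hs1 hs2 hσ f hfX
    set v := x₁ - x₂ with hv
    have hvker : v ∈ LinearMap.ker σ := by
      simp [hv, LinearMap.mem_ker, map_sub, hσ]
    have hvsupp : Function.support v ⊆ 𝓔 ∪ X := by
      intro g hg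
      simp only [Function.mem_support, hv, Pi.sub_apply] at hg
      by_cases h1g : x₁ g = 0
      · apply hs2
        simp only [Function.mem_support]
        intro h2g
        exact hg (by simp [h1g, h2g])
      · exact hs1 h1g
    by_cases hv0 : v = 0
    · have := congrFun hv0 f
      simp only [hv, Pi.sub_apply, Pi.zero_apply, sub_eq_zero] at this
      exact this
    · have hvX := h1 v hvker hv0 hvsupp
      have : v f = 0 := by
        by_contra h
        exact hfX (hvX h)
      simpa [hv, sub_eq_zero] using this
end

section
/- Remark (evenness of volume incidence along a face path between volumes; Remark 4 of the paper): Let (f₁, …, f_m; ν₁, …, ν_{m−1}) be a face path from a volume ν₀ to a volume ν_m (so ν₀ ∈ ι f₁, ν_m ∈ ι f_m, ν₀ ≠ ν_m, and ν₀, ν_m ∉ {ν₁, …, ν_{m−1}}). Then for every volume ν with ν ≠ ν₀ and ν ≠ ν_m, the number of indices i ∈ {1, …, m} with ν ∈ ι f_i is even. -/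
lemma mem_eq_of_card_le_two' {α : Type*} [DecidableEq α] {s : Finset α} (h : s.card ≤ 2)
    {a b c : α} (ha : a ∈ s) (hb : b ∈ s) (hab : a ≠ b) (hc : c ∈ s) : c = a ∨ c = b := by
  have hsub : ({a, b} : Finset α) ⊆ s := by
    intro x hx
    simp only [Finset.mem_insert, Finset.mem_singleton] at hx
    rcases hx with rfl | rfl <;> assumption
  have hcard : ({a, b} : Finset α).card = 2 := Finset.card_pair hab
  have := (Finset.eq_of_subset_of_card_le hsub (by omega)).symm
  rw [this] at hc
  simpa using hc

/-- Remark 4: along a face path from a volume `ν₀` to a volume `νm`, every volume other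
than `ν₀` and `νm` is incident on an even number of faces of the path. -/
theorem face_path_from_to_even_incidence
    {Faces Volumes : Type*} [Fintype Faces] [Fintype Volumes] [DecidableEq Volumes]
    (ι : Faces → Finset Volumes)
    (hcard : ∀ f, 1 ≤ (ι f).card ∧ (ι f).card ≤ 2)
    (m : ℕ) (p : FacePath ι m) (ν₀ νm : Volumes)
    (hft : p.FromTo ν₀ νm) :
    ∀ ν : Volumes, ν ≠ ν₀ → ν ≠ νm →
      Even (((Finset.range m).filter (fun i => ν ∈ ι (p.f i))).card) := by
  obtain ⟨h0, hm, hne, hv0, hvm⟩ := hft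
  intro ν hν0 hνm
  have key : ∀ i, i < m →
      (ν ∈ ι (p.f i) ↔ (1 ≤ i ∧ p.v (i - 1) = ν) ∨ (i + 1 < m ∧ p.v i = ν)) := by
    intro i hi
    constructor
    · intro hmem
      by_cases hi0 : i = 0
      · subst hi0
        by_cases h1 : 1 < m
        · have hR : p.v 0 ∈ ι (p.f 0) := p.mem_left 0 (by omega)
          have hLR : ν₀ ≠ p.v 0 := fun h => hv0 0 (by omega) h.symm
          rcases mem_eq_of_card_le_two' (hcard (p.f 0)).2 h0 hR hLR hmem with h | h
          · exact absurd h hν0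
          · exact Or.inr ⟨by omega, h.symm⟩
        · have hm1 : m - 1 = 0 := by omega
          rw [hm1] at hm
          rcases mem_eq_of_card_le_two' (hcard (p.f 0)).2 h0 hm hne hmem with h | h
          · exact absurd h hν0
          · exact absurd h hνm
      · by_cases h1 : i + 1 < m
        · have hL : p.v (i - 1) ∈ ι (p.f i) := by
            have := p.mem_right (i - 1) (by omega)
            have hii : i - 1 + 1 = i := by omega
            rwa [hii] at this
          have hR : p.v i ∈ ι (p.f i) := p.mem_left i h1
          have hLR : p.v (i - 1) ≠ p.v i := p.distinct _ _ (by omega) h1 (by omega)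
          rcases mem_eq_of_card_le_two' (hcard (p.f i)).2 hL hR hLR hmem with h | h
          · exact Or.inl ⟨by omega, h.symm⟩
          · exact Or.inr ⟨h1, h.symm⟩
        · have him : i = m - 1 := by omega
          have hL : p.v (i - 1) ∈ ι (p.f i) := by
            have := p.mem_right (i - 1) (by omega)
            have hii : i - 1 + 1 = i := by omega
            rwa [hii] at this
          have hR : νm ∈ ι (p.f i) := by rw [him]; exact hm
          have hLR : p.v (i - 1) ≠ νm := hvm (i - 1) (by omega)
          rcases mem_eq_of_card_le_two' (hcard (p.f i)).2 hL hR hLR hmem with h | h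
          · exact Or.inl ⟨by omega, h.symm⟩
          · exact absurd h hνm
    · rintro (⟨h1, h2⟩ | ⟨h1, h2⟩)
      · have := p.mem_right (i - 1) (by omega)
        have hii : i - 1 + 1 = i := by omega
        rw [hii] at this
        rwa [h2] at this
      · have := p.mem_left i h1
        rwa [h2] at this
  by_cases hex : ∃ j, j + 1 < m ∧ p.v j = ν
  · obtain ⟨j, hj, hjv⟩ := hex
    have hfilt : (Finset.range m).filter (fun i => ν ∈ ι (p.f i)) = {j, j + 1} := by
      ext i
      simp only [Finset.mem_filter, Finset.mem_range, Finset.mem_insert, Finset.mem_singleton]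
      constructor
      · rintro ⟨hi, hmem⟩
        rcases (key i hi).1 hmem with ⟨h1, h2⟩ | ⟨h1, h2⟩
        · right
          have : i - 1 = j := by
            by_contra hne'
            exact p.distinct _ _ (by omega) hj hne' (h2.trans hjv.symm)
          omega
        · left
          by_contra hne'
          exact p.distinct _ _ h1 hj hne' (h2.trans hjv.symm)
      · rintro (rfl | rfl)
        · exact ⟨by omega, (key _ (by omega)).2 (Or.inr ⟨hj, hjv⟩)⟩
        · refine ⟨hj, (key (j + 1) hj).2 (Or.inl ⟨by omega, ?_⟩)⟩
          simpa using hjv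
    rw [hfilt, Finset.card_pair (by omega)]
    exact even_two
  · have hfilt : (Finset.range m).filter (fun i => ν ∈ ι (p.f i)) = ∅ := by
      rw [Finset.filter_eq_empty_iff]
      intro i hi hmem
      have hi' : i < m := Finset.mem_range.mp hi
      rcases (key i hi').1 hmem with ⟨h1, h2⟩ | ⟨h1, h2⟩
      · exact hex ⟨i - 1, by omega, h2⟩
      · exact hex ⟨i, h1, h2⟩
    rw [hfilt]
    simp
end
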